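/- There exists a finite stochastic decision problem and a coordinate set I such that I is stochastically decisive but I is not stochastically sufficient. (For instance: two states with equal probability 1/2, two actions a, b with utilities U(a,s₁)=2, U(b,s₁)=1, U(a,s₂)=0, U(b,s₂)=3, and I = ∅: the unique prior-optimal action is b, so I is decisive, but Opt(s₁) = {a} ≠ OptS_∅(s₁).) -/
import Mathlib


/-- Full-information optimizer: actions maximizing pointwise utility at state `s`. -/
def Opt {n : ℕ} {A : Type*} {X : Fin n → Type*}
    (U : A → (∀ i, X i) → ℝ) (s : ∀ i, X i) : Set A :=
  {a | ∀ b, U b s ≤ U a s}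

/-- Conditional (unnormalized) expected utility of action `a` over the `I`-fiber of `s`. -/
noncomputable def condEU {n : ℕ} {A : Type*} {X : Fin n → Type*}
    [∀ i, Fintype (X i)] [∀ i, DecidableEq (X i)]
    (U : A → (∀ i, X i) → ℝ) (P : (∀ i, X i) → ℝ)
    (I : Finset (Fin n)) (s : ∀ i, X i) (a : A) : ℝ :=
  ∑ t ∈ Finset.univ.filter (fun t : ∀ i, X i => ∀ i ∈ I, t i = s i), P t * U a t

/-- Conditional optimizer: actions maximizing conditional expected utility on the `I`-fiber. -/
noncomputable def OptS {n : ℕ} {A : Type*} {X : Fin n → Type*}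
    [∀ i, Fintype (X i)] [∀ i, DecidableEq (X i)]
    (U : A → (∀ i, X i) → ℝ) (P : (∀ i, X i) → ℝ)
    (I : Finset (Fin n)) (s : ∀ i, X i) : Set A :=
  {a | ∀ b, condEU U P I s b ≤ condEU U P I s a}

/-- `I` is statically sufficient: states agreeing on `I` have the same optimizer. -/
def StaticSufficient {n : ℕ} {A : Type*} {X : Fin n → Type*}
    (U : A → (∀ i, X i) → ℝ) (I : Finset (Fin n)) : Prop :=
  ∀ s t : ∀ i, X i, (∀ i ∈ I, s i = t i) → Opt U s = Opt U t

/-- `I` is stochastically sufficient: the conditional optimizer agrees with the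
full-information optimizer at every state. -/
def StochSufficient {n : ℕ} {A : Type*} {X : Fin n → Type*}
    [∀ i, Fintype (X i)] [∀ i, DecidableEq (X i)]
    (U : A → (∀ i, X i) → ℝ) (P : (∀ i, X i) → ℝ) (I : Finset (Fin n)) : Prop :=
  ∀ s : ∀ i, X i, OptS U P I s = Opt U s

/-- `I` is stochastically decisive: every positive-probability state's observed fiber
has a unique conditional optimal action. -/
def StochDecisive {n : ℕ} {A : Type*} {X : Fin n → Type*}
    [∀ i, Fintype (X i)] [∀ i, DecidableEq (X i)]
    (U : A → (∀ i, X i) → ℝ) (P : (∀ i, X i) → ℝ) (I : Finset (Fin n)) : Prop :=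
  ∀ s : ∀ i, X i, 0 < P s → ∃ a : A, OptS U P I s = {a}

/-- Total probability mass. -/
noncomputable def totalMass {n : ℕ} {X : Fin n → Type*}
    [∀ i, Fintype (X i)] (P : (∀ i, X i) → ℝ) : ℝ :=
  ∑ s : ∀ i, X i, P s


private theorem sum_pi1 (f : (∀ _ : Fin 1, Bool) → ℝ) :
    ∑ t, f t = f (fun _ => true) + f (fun _ => false) := by
  rw [Fintype.sum_equiv (Equiv.funUnique (Fin 1) Bool) f (fun b => f (fun _ => b))
    (by intro t; congr 1; funext i; rw [Subsingleton.elim i default]; rfl)]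
  simp [Fintype.sum_bool]

theorem decisiveness_does_not_imply_preservation :
    ∃ (n : ℕ) (A : Type) (_fA : Fintype A) (_nA : Nonempty A)
      (X : Fin n → Type) (fX : ∀ i, Fintype (X i)) (_nX : ∀ i, Nonempty (X i))
      (dX : ∀ i, DecidableEq (X i))
      (U : A → (∀ i, X i) → ℝ) (P : (∀ i, X i) → ℝ) (I : Finset (Fin n)),
      (∀ s, 0 ≤ P s) ∧ @totalMass n X fX P = 1 ∧
        @StochDecisive n A X fX dX U P I ∧ ¬ @StochSufficient n A X fX dX U P I := by
  set U : Bool → (∀ _ : Fin 1, Bool) → ℝ :=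
    fun a t => if t 0 = true then (if a then 2 else 1) else (if a then 0 else 3) with hU
  set P : (∀ _ : Fin 1, Bool) → ℝ := fun _ => 1/2 with hP
  have hEU : ∀ (s : ∀ _ : Fin 1, Bool) (a : Bool),
      condEU U P (∅ : Finset (Fin 1)) s a = if a then 1 else 2 := by
    intro s a
    unfold condEU
    rw [Finset.filter_true_of_mem (by intro t _ i hi; exact absurd hi (Finset.notMem_empty i))]
    rw [sum_pi1 (fun t => P t * U a t)]
    cases a <;> simp [hU, hP] <;> norm_num
  have hOptS : ∀ s : ∀ _ : Fin 1, Bool, OptS U P (∅ : Finset (Fin 1)) s = {false} := by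
    intro s
    ext a
    simp only [OptS, hEU, Set.mem_setOf_eq, Set.mem_singleton_iff]
    constructor
    · intro h
      cases a with
      | false => rfl
      | true => have := h false; norm_num at this
    · rintro rfl b
      cases b <;> norm_num
  refine ⟨1, Bool, inferInstance, ⟨true⟩, fun _ => Bool, fun _ => inferInstance,
    fun _ => ⟨true⟩, fun _ => inferInstance, U, P, ∅, ?_, ?_, ?_, ?_⟩
  · intro s; norm_num [hP]
  · rw [totalMass, sum_pi1 P]; simp [hP]; norm_num
  · intro s _; exact ⟨false, hOptS s⟩
  · intro h
    have h1 : (false : Bool) ∈ OptS U P (∅ : Finset (Fin 1)) (fun _ => true) := by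
      rw [hOptS]; rfl
    rw [h] at h1
    have h2 := h1 true
    simp [hU, Opt] at h2
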